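/- Fix an execution of the Eneström–Phragmén procedure and a subset J of candidates. Let p = min{s : w_*[s] ≤ q} (which satisfies p ≤ n), and for s ≤ p let p_J(s) denote the number of seats allocated to members of J during steps 0,…,s−1. Then v_J[s] ≥ v_J − p_J(s)·q for all s ≤ p, where v_J[s] = Σ_{k : A_k = J} v_k[s]. -/
import Mathlib


/-!
The Eneström–Phragmén procedure.

We fix a number of seats `n ≥ 1`, a finite set `ι` of candidates with capacities
`m i ∈ ℕ∞`, a finite set `κ` of vote types, and for each vote type a positive weight
`v k` and a nonempty approval set `A k`.  The total vote is `V = ∑ k, v k` and the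
(Droop) quota is `q = V / (n + 1)`.  An execution of the procedure is recorded by the
vote weights `vk s k` at each step `s`, the seat counts `seats s i`, and the candidate
`winner s` receiving seat `s + 1` (for `s < n`), subject to the rules of the procedure.
-/

namespace EP

/-- The data of an Eneström–Phragmén election. -/
structure Input (ι κ : Type*) [Fintype ι] [DecidableEq ι] [Fintype κ] : Type _ where
  /-- number of seats -/
  n : ℕ
  hn : 1 ≤ n
  /-- capacities of the candidates -/
  m : ι → ℕ∞
  /-- weights of the vote types -/
  v : κ → ℝ
  hv : ∀ k, 0 < v k
  /-- approval sets of the vote types -/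
  A : κ → Finset ι
  hA : ∀ k, (A k).Nonempty

namespace Input

variable {ι κ : Type*} [Fintype ι] [DecidableEq ι] [Fintype κ] (P : Input ι κ)

/-- Total number of votes. -/
noncomputable def V : ℝ := ∑ k, P.v k

/-- The Droop quota `q = v / (n + 1)`. -/
noncomputable def q : ℝ := P.V / (P.n + 1)

/-- Support of candidate `i` given current vote weights `u`:
`w_i = ∑_{k : i ∈ A_k} u_k`. -/
noncomputable def supp (u : κ → ℝ) (i : ι) : ℝ :=
  ∑ k ∈ Finset.univ.filter (fun k => i ∈ P.A k), u k

/-- Standing assumption: at least `n` candidates have positive initial support. -/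
def enough : Prop := P.n ≤ {i : ι | 0 < P.supp P.v i}.ncard

end Input

/-- An execution of the Eneström–Phragmén procedure: at each step `s < n`,
seat `s + 1` is given to an eligible candidate `winner s` of maximal support, and the
votes approving the winner are reduced according to the quota rule. -/
structure Exec {ι κ : Type*} [Fintype ι] [DecidableEq ι] [Fintype κ]
    (P : Input ι κ) : Type _ where
  /-- the vote weights `v_k[s]` -/
  vk : ℕ → κ → ℝ
  /-- the seat counts `n_i[s]` -/
  seats : ℕ → ι → ℕ
  /-- the candidate receiving seat `s + 1` -/
  winner : ℕ → ι
  vk_init : vk 0 = P.v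
  seats_init : ∀ i, seats 0 i = 0
  /-- the winner is eligible -/
  winner_elig : ∀ s < P.n, (seats s (winner s) : ℕ∞) < P.m (winner s)
  /-- the winner maximizes the support among eligible candidates -/
  winner_max : ∀ s < P.n, ∀ i : ι, (seats s i : ℕ∞) < P.m i →
    P.supp (vk s) i ≤ P.supp (vk s) (winner s)
  seats_succ : ∀ s < P.n, ∀ i : ι,
    seats (s + 1) i = if i = winner s then seats s i + 1 else seats s i
  /-- vote reduction when the winner has at least a quota -/
  vk_succ_ge : ∀ s < P.n, ∀ k, winner s ∈ P.A k → P.q ≤ P.supp (vk s) (winner s) →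
    vk (s + 1) k = (1 - P.q / P.supp (vk s) (winner s)) * vk s k
  /-- vote exhaustion when the winner has less than a quota -/
  vk_succ_lt : ∀ s < P.n, ∀ k, winner s ∈ P.A k → P.supp (vk s) (winner s) < P.q →
    vk (s + 1) k = 0
  /-- votes not approving the winner are unchanged -/
  vk_succ_out : ∀ s < P.n, ∀ k, winner s ∉ P.A k → vk (s + 1) k = vk s k

end EP

open EP in
/-- fix an execution and a subset `J`.  Let `p = min {s : w_*[s] ≤ q}`
(characterized by: `p ≤ n`, at every earlier step the winner's support exceeds `q`, and
at step `p` every eligible candidate has support at most `q`).  Then for all `s ≤ p`,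
`v_J[s] ≥ v_J - p_J(s) · q`, where `p_J(s)` is the number of seats allocated to members
of `J` during steps `0, …, s - 1`. -/
theorem enestrom_phragmen_vJ_lower_bound
    {ι κ : Type*} [Fintype ι] [DecidableEq ι] [Fintype κ]
    (P : Input ι κ) (henough : P.enough) (E : Exec P) (J : Finset ι)
    (p : ℕ) (hpn : p ≤ P.n)
    (hmin : ∀ s < p, P.q < P.supp (E.vk s) (E.winner s))
    (hp : ∀ i : ι, (E.seats p i : ℕ∞) < P.m i → P.supp (E.vk p) i ≤ P.q) :
    ∀ s ≤ p,
      (∑ k ∈ Finset.univ.filter (fun k => P.A k = J), P.v k) -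
        (((Finset.range s).filter (fun t => E.winner t ∈ J)).card : ℝ) * P.q
      ≤ ∑ k ∈ Finset.univ.filter (fun k => P.A k = J), E.vk s k := by
  have hq0 : 0 ≤ P.q := by
    have hV : 0 ≤ P.V := Finset.sum_nonneg fun k _ => (P.hv k).le
    exact div_nonneg hV (by positivity)
  have hnn : ∀ s, s ≤ p → ∀ k, 0 ≤ E.vk s k := by
    intro s
    induction s with
    | zero => intro _ k; rw [E.vk_init]; exact (P.hv k).le
    | succ s ih =>
      intro hs k
      have hsp : s < p := hs
      have hsn : s < P.n := lt_of_lt_of_le hsp hpn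
      have hw : P.q < P.supp (E.vk s) (E.winner s) := hmin s hsp
      have hwpos : 0 < P.supp (E.vk s) (E.winner s) := lt_of_le_of_lt hq0 hw
      by_cases hk : E.winner s ∈ P.A k
      · rw [E.vk_succ_ge s hsn k hk hw.le]
        have h1 : P.q / P.supp (E.vk s) (E.winner s) ≤ 1 :=
          div_le_one_of_le₀ hw.le hwpos.le
        have := ih hsp.le k
        nlinarith
      · rw [E.vk_succ_out s hsn k hk]; exact ih hsp.le k
  intro s
  induction s with
  | zero => intro _; simp [E.vk_init]
  | succ s ih =>
    intro hs
    have hsp : s < p := hs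
    have hsn : s < P.n := lt_of_lt_of_le hsp hpn
    have hw : P.q < P.supp (E.vk s) (E.winner s) := hmin s hsp
    have hwpos : 0 < P.supp (E.vk s) (E.winner s) := lt_of_le_of_lt hq0 hw
    have ih' := ih hsp.le
    by_cases hJ : E.winner s ∈ J
    · have hcard : ((Finset.range (s+1)).filter (fun t => E.winner t ∈ J)).card
          = ((Finset.range s).filter (fun t => E.winner t ∈ J)).card + 1 := by
        rw [Finset.range_add_one, Finset.filter_insert, if_pos hJ,
          Finset.card_insert_of_notMem (by simp)]
      have hsum : ∑ k ∈ Finset.univ.filter (fun k => P.A k = J), E.vk (s+1) k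
          = (1 - P.q / P.supp (E.vk s) (E.winner s)) *
            ∑ k ∈ Finset.univ.filter (fun k => P.A k = J), E.vk s k := by
        rw [Finset.mul_sum]
        refine Finset.sum_congr rfl fun k hk => ?_
        have hAk : P.A k = J := (Finset.mem_filter.mp hk).2
        exact E.vk_succ_ge s hsn k (hAk ▸ hJ) hw.le
      set S := ∑ k ∈ Finset.univ.filter (fun k => P.A k = J), E.vk s k with hS
      have hS0 : 0 ≤ S := Finset.sum_nonneg fun k _ => hnn s hsp.le k
      have hSw : S ≤ P.supp (E.vk s) (E.winner s) := by
        apply Finset.sum_le_sum_of_subset_of_nonneg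
        · intro k hk
          simp only [Finset.mem_filter] at hk ⊢
          exact ⟨hk.1, hk.2 ▸ hJ⟩
        · intro k _ _; exact hnn s hsp.le k
      have key : P.q / P.supp (E.vk s) (E.winner s) * S ≤ P.q := by
        rw [div_mul_eq_mul_div, div_le_iff₀ hwpos]
        nlinarith
      rw [hsum, hcard]
      push_cast
      nlinarith
    · have hcard : ((Finset.range (s+1)).filter (fun t => E.winner t ∈ J)).card
          = ((Finset.range s).filter (fun t => E.winner t ∈ J)).card := by
        rw [Finset.range_add_one, Finset.filter_insert, if_neg hJ]
      have hsum : ∑ k ∈ Finset.univ.filter (fun k => P.A k = J), E.vk (s+1) k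
          = ∑ k ∈ Finset.univ.filter (fun k => P.A k = J), E.vk s k := by
        refine Finset.sum_congr rfl fun k hk => ?_
        have hAk : P.A k = J := (Finset.mem_filter.mp hk).2
        exact E.vk_succ_out s hsn k (fun h => hJ (hAk ▸ h))
      rw [hsum, hcard]
      exact ih'
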